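/- For any a > 0 and 0 < r < 1, and all integers t ≥ 0: Σ_{s=0}^t r^{−s}/(s+a) ≤ δ₁ r^{−t}/(t+a) + δ₂/(t+a) + δ₃, where t₀ = max(⌈2/ln(r^{−1}) − a⌉ + 1, 1), δ₁ = (t₀+a)/(r(ln(r^{−1})(t₀+a) − 2)), δ₂ = t₀ r^{−t₀}(t₀+a)/a, and δ₃ = 2t₀ r^{−t₀}(t₀+a)/(a²(ln(r^{−1})(t₀+a) − 2)) + 1/a. -/

import Mathlib

set_option maxHeartbeats 1000000


/-- Lemma 9 of the paper: for any `a > 0` and `0 < r < 1`, and all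
integers `t ≥ 0`: `∑_{s=0}^t r^{−s}/(s+a) ≤ δ₁ r^{−t}/(t+a) + δ₂/(t+a) + δ₃`, where
`t₀ = max(⌈2/ln(r^{−1}) − a⌉ + 1, 1)`, `δ₁ = (t₀+a)/(r(ln(r^{−1})(t₀+a) − 2))`,
`δ₂ = t₀ r^{−t₀}(t₀+a)/a`, and
`δ₃ = 2 t₀ r^{−t₀}(t₀+a)/(a²(ln(r^{−1})(t₀+a) − 2)) + 1/a`. -/
theorem sum_inv_geom_div_linear_le (a r : ℝ) (ha : 0 < a) (hr : 0 < r) (hr1 : r < 1)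
    (t₀ : ℤ) (ht₀ : t₀ = max (⌈2 / Real.log r⁻¹ - a⌉ + 1) 1)
    (δ₁ δ₂ δ₃ : ℝ)
    (hδ₁ : δ₁ = ((t₀ : ℝ) + a) / (r * (Real.log r⁻¹ * ((t₀ : ℝ) + a) - 2)))
    (hδ₂ : δ₂ = (t₀ : ℝ) * r ^ (-t₀) * ((t₀ : ℝ) + a) / a)
    (hδ₃ : δ₃ = 2 * (t₀ : ℝ) * r ^ (-t₀) * ((t₀ : ℝ) + a)
        / (a ^ 2 * (Real.log r⁻¹ * ((t₀ : ℝ) + a) - 2)) + 1 / a) :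
    ∀ t : ℕ,
      ∑ s ∈ Finset.range (t + 1), r ^ (-(s : ℤ)) / ((s : ℝ) + a) ≤
        δ₁ * r ^ (-(t : ℤ)) / ((t : ℝ) + a) + δ₂ / ((t : ℝ) + a) + δ₃ := by
  have hL : 0 < Real.log r⁻¹ := Real.log_pos (one_lt_inv_iff₀.mpr ⟨hr, hr1⟩)
  set L := Real.log r⁻¹ with hLdef
  have ht₀1 : (1:ℤ) ≤ t₀ := by rw [ht₀]; exact le_max_right _ _
  have hceil : 2 / L - a < (t₀ : ℝ) := by
    have h1 : (⌈2 / L - a⌉ : ℤ) + 1 ≤ t₀ := by rw [ht₀]; exact le_max_left _ _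
    have h2 := Int.le_ceil (2 / L - a)
    have h3 : ((⌈2/L - a⌉ : ℤ) : ℝ) + 1 ≤ (t₀:ℝ) := by exact_mod_cast h1
    linarith
  have haL : 2 ≤ t₀ → a * L < 2 := by
    intro h2
    have : 1 ≤ ⌈2 / L - a⌉ := by omega
    have hpos : 0 < 2 / L - a := by
      by_contra hcon
      push_neg at hcon
      have : ⌈2 / L - a⌉ ≤ 0 := Int.ceil_le.mpr (by exact_mod_cast hcon)
      omega
    have : a < 2 / L := by linarith
    calc a * L < (2/L) * L := by exact mul_lt_mul_of_pos_right this hL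
    _ = 2 := by field_simp
  -- replace t₀ by a natural number n₀
  obtain ⟨n₀, hn₀⟩ : ∃ n : ℕ, (n : ℤ) = t₀ := ⟨t₀.toNat, Int.toNat_of_nonneg (by linarith)⟩
  subst hn₀
  push_cast at hceil hδ₁ hδ₂ hδ₃ ht₀1 ⊢
  have hn₀1 : 1 ≤ n₀ := by exact_mod_cast ht₀1
  have hn₀R : (1:ℝ) ≤ (n₀:ℝ) := by exact_mod_cast hn₀1
  set u₀ : ℝ := (n₀:ℝ) + a with hu₀def
  have hu₀pos : 0 < u₀ := by positivity
  have hc2 : 2 < L * u₀ := by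
    have h4 : 2 / L < u₀ := by rw [hu₀def]; linarith
    calc (2:ℝ) = L * (2/L) := by field_simp
    _ < L * u₀ := mul_lt_mul_of_pos_left h4 hL
  have hcpos : 0 < L * u₀ - 2 := by linarith
  have hinv : 1 + L ≤ r⁻¹ := by
    have h5 := Real.add_one_le_exp L
    rw [hLdef, Real.exp_log (inv_pos.mpr hr)] at h5
    linarith
  have hrL : r * L ≤ 1 - r := by
    have h6 := mul_le_mul_of_nonneg_left hinv hr.le
    rw [mul_inv_cancel₀ (ne_of_gt hr)] at h6
    nlinarith
  have hrc : r * (L * u₀ - 2) < u₀ := by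
    nlinarith [mul_le_mul_of_nonneg_right hrL hu₀pos.le]
  have hδ₁1 : 1 ≤ δ₁ := by
    rw [hδ₁, le_div_iff₀ (by positivity)]
    linarith
  have hδ₁pos : 0 < δ₁ := lt_of_lt_of_le one_pos hδ₁1
  have hδ₂pos : 0 ≤ δ₂ := by
    rw [hδ₂]; positivity
  have hδ₃pos : 0 ≤ δ₃ := by
    rw [hδ₃]
    have : (0:ℝ) ≤ 2 * (n₀:ℝ) * r ^ (-(n₀:ℤ)) * u₀ / (a ^ 2 * (L * u₀ - 2)) := by
      apply div_nonneg (by positivity) (by positivity)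
    positivity
  -- step inequality
  have hstep : ∀ m : ℕ, n₀ ≤ m →
      δ₁ * (r ^ (-(m:ℤ)) / ((m:ℝ) + a)) + r ^ (-((m+1:ℕ):ℤ)) / (((m+1:ℕ):ℝ) + a)
        ≤ δ₁ * (r ^ (-((m+1:ℕ):ℤ)) / (((m+1:ℕ):ℝ) + a)) := by
    intro m hm
    have hv : u₀ ≤ (m:ℝ) + a := by
      have : (n₀:ℝ) ≤ (m:ℝ) := Nat.cast_le.mpr hm
      rw [hu₀def]; linarith
    set v : ℝ := (m:ℝ) + a with hvdef
    have hvpos : 0 < v := lt_of_lt_of_le hu₀pos hv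
    have hP : (0:ℝ) < r ^ (-(m:ℤ)) := zpow_pos hr _
    set P := r ^ (-(m:ℤ)) with hPdef
    have hsucc : r ^ (-((m+1:ℕ):ℤ)) = P / r := by
      rw [hPdef]
      push_cast
      rw [neg_add, zpow_add₀ (ne_of_gt hr), zpow_neg_one]
      ring
    have hvsucc : (((m+1:ℕ):ℝ)) + a = v + 1 := by push_cast; rw [hvdef]; ring
    rw [hsucc, hvsucc, hδ₁]
    have hmain : r * (L * u₀ - 2) * v ≤ u₀ * (v - r * (v + 1)) := by
      nlinarith [mul_nonneg (mul_nonneg (sub_nonneg.mpr hrL) hvpos.le) hu₀pos.le,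
        mul_nonneg (sub_nonneg.mpr hv) hr.le, mul_pos hr hu₀pos]
    rw [← sub_nonneg]
    have hexp : u₀ / (r * (L * u₀ - 2)) * (P / r / (v + 1)) -
        (u₀ / (r * (L * u₀ - 2)) * (P / v) + P / r / (v + 1))
        = (u₀ * (v - r * (v + 1)) - r * (L * u₀ - 2) * v) * P
            / (r ^ 2 * (L * u₀ - 2) * v * (v + 1)) := by
      have hc0 : L * u₀ - 2 ≠ 0 := hcpos.ne'
      generalize L * u₀ - 2 = c at hc0 ⊢
      field_simp
      ring
    rw [hexp]
    apply div_nonneg (mul_nonneg (by linarith) hP.le) (by positivity)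
  -- tail estimate
  have htail : ∀ k : ℕ,
      ∑ s ∈ Finset.range (k+1), r ^ (-((n₀+s:ℕ):ℤ)) / (((n₀+s:ℕ):ℝ) + a)
        ≤ δ₁ * (r ^ (-((n₀+k:ℕ):ℤ)) / (((n₀+k:ℕ):ℝ) + a)) := by
    intro k
    induction k with
    | zero =>
      rw [show (0:ℕ)+1 = 1 from rfl, Finset.sum_range_one]
      simp only [Nat.add_zero]
      exact le_mul_of_one_le_left (by positivity) hδ₁1
    | succ k ih =>
      rw [Finset.sum_range_succ]
      have h8 := hstep (n₀ + k) (Nat.le_add_right _ _)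
      rw [show n₀ + (k+1) = (n₀ + k) + 1 from rfl]
      linarith
  intro t
  rcases lt_or_ge t n₀ with hlt | hge
  · -- small t : bound everything by δ₂/(t+a)
    have hterm : ∀ s ∈ Finset.range (t+1),
        r ^ (-(s:ℤ)) / ((s:ℝ) + a) ≤ r ^ (-(n₀:ℤ)) / a := by
      intro s hs
      apply div_le_div₀ (by positivity) _ ha (by
        have : (0:ℝ) ≤ (s:ℝ) := Nat.cast_nonneg _
        linarith)
      apply zpow_le_zpow_right_of_le_one₀ hr hr1.le
      have : s ≤ n₀ := by
        simp only [Finset.mem_range] at hs; omega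
      omega
    have hsum := Finset.sum_le_card_nsmul _ _ _ hterm
    rw [Finset.card_range, nsmul_eq_mul] at hsum
    have ht1 : ((t+1:ℕ):ℝ) ≤ (n₀:ℝ) := by exact_mod_cast hlt
    have hta : (t:ℝ) + a ≤ u₀ := by
      have : (t:ℝ) ≤ (n₀:ℝ) := by push_cast at ht1 ⊢; linarith
      rw [hu₀def]; linarith
    have htapos : 0 < (t:ℝ) + a := by positivity
    have hRpos : (0:ℝ) < r ^ (-(n₀:ℤ)) := zpow_pos hr _
    have hsum2 : ∑ s ∈ Finset.range (t+1), r ^ (-(s:ℤ)) / ((s:ℝ) + a)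
        ≤ (n₀:ℝ) * (r ^ (-(n₀:ℤ)) / a) := by
      calc ∑ s ∈ Finset.range (t+1), r ^ (-(s:ℤ)) / ((s:ℝ) + a)
          ≤ ((t+1:ℕ):ℝ) * (r ^ (-(n₀:ℤ)) / a) := hsum
        _ ≤ (n₀:ℝ) * (r ^ (-(n₀:ℤ)) / a) := by
            apply mul_le_mul_of_nonneg_right ht1 (by positivity)
    have hδ₂t : (n₀:ℝ) * (r ^ (-(n₀:ℤ)) / a) ≤ δ₂ / ((t:ℝ) + a) := by
      rw [hδ₂]
      have he : (n₀:ℝ) * r ^ (-(n₀:ℤ)) * u₀ / a / ((t:ℝ) + a)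
          = ((n₀:ℝ) * (r ^ (-(n₀:ℤ)) / a)) * (u₀ / ((t:ℝ) + a)) := by
        field_simp
      rw [he]
      have h1u : (1:ℝ) ≤ u₀ / ((t:ℝ) + a) := (one_le_div htapos).mpr hta
      exact le_mul_of_one_le_right (by positivity) h1u
    have hfirst : 0 ≤ δ₁ * r ^ (-(t:ℤ)) / ((t:ℝ) + a) := by positivity
    linarith
  · -- large t
    obtain ⟨k, rfl⟩ : ∃ k, t = n₀ + k := ⟨t - n₀, by omega⟩
    rw [show n₀ + k + 1 = n₀ + (k+1) from rfl]
    rw [Finset.sum_range_add]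
    have hhead : ∑ s ∈ Finset.range n₀, r ^ (-(s:ℤ)) / ((s:ℝ) + a) ≤ δ₃ := by
      rw [show n₀ = 1 + (n₀ - 1) by omega, Finset.sum_range_add]
      have h0 : ∑ s ∈ Finset.range 1, r ^ (-(s:ℤ)) / ((s:ℝ) + a) = 1/a := by
        simp
      rw [h0]
      have hRpos : (0:ℝ) < r ^ (-(n₀:ℤ)) := zpow_pos hr _
      have hterm2 : ∀ s ∈ Finset.range (n₀ - 1),
          r ^ (-((1 + s:ℕ):ℤ)) / (((1 + s:ℕ):ℝ) + a) ≤ r ^ (-(n₀:ℤ)) / (1 + a) := by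
        intro s hs
        simp only [Finset.mem_range] at hs
        apply div_le_div₀ (by positivity) _ (by linarith) (by push_cast; linarith [Nat.cast_nonneg (α := ℝ) s])
        apply zpow_le_zpow_right_of_le_one₀ hr hr1.le
        omega
      have hsum3 := Finset.sum_le_card_nsmul _ _ _ hterm2
      rw [Finset.card_range, nsmul_eq_mul] at hsum3
      have hmid : ((n₀-1:ℕ):ℝ) * (r ^ (-(n₀:ℤ)) / (1 + a))
          ≤ 2 * (n₀:ℝ) * r ^ (-(n₀:ℤ)) * u₀ / (a ^ 2 * (L * u₀ - 2)) := by
        rcases Nat.eq_or_lt_of_le hn₀1 with h1' | h2'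
        · simp [← h1']
          positivity
        · have haL2 : a * L < 2 := haL (by exact_mod_cast h2')
          have hm1 : ((n₀-1:ℕ):ℝ) = (n₀:ℝ) - 1 := by
            push_cast [Nat.cast_sub hn₀1]; ring
          have hkey : ((n₀:ℝ) - 1) * a ^ 2 * (L * u₀ - 2) ≤ 2 * (n₀:ℝ) * u₀ * (1 + a) := by
            nlinarith [mul_le_mul_of_nonneg_right
                (mul_le_mul_of_nonneg_left haL2.le (mul_nonneg ha.le (sub_nonneg.mpr hn₀R)))
                hu₀pos.le,
              mul_pos hu₀pos ha, sq_nonneg a, mul_pos (mul_pos hu₀pos ha) ha,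
              mul_nonneg (mul_nonneg (sub_nonneg.mpr hn₀R) ha.le) ha.le]
          rw [hm1, mul_div_assoc', div_le_div_iff₀ (by linarith) (by positivity)]
          nlinarith [mul_le_mul_of_nonneg_right hkey hRpos.le]
      rw [hδ₃]
      linarith
    have htt := htail k
    have hzero : 0 ≤ δ₂ / (((n₀ + k:ℕ):ℝ) + a) := by positivity
    have hfin : δ₁ * (r ^ (-((n₀+k:ℕ):ℤ)) / (((n₀+k:ℕ):ℝ) + a))
        = δ₁ * r ^ (-((n₀+k:ℕ):ℤ)) / (((n₀+k:ℕ):ℝ) + a) := by ring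
    linarith [htt, hhead, hzero]
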